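/- Let G = (V,E) be a finite connected vertex-transitive graph with diameter γ, satisfying (c,a)-moderate growth: every ball of radius r has at least c·|V|·(r/γ)^a vertices. Fix o ∈ V, let X, Y be independent uniform on V, and let f: V → R satisfy |f(x) − d_G(x,o)| ≤ N for all x, where 0 ≤ N ≤ γ/4 and d_G is graph distance. Then Var(f(X)) ≥ c₁(a,c)·(γ − 4N)², where c₁(a,c) > 0 depends only on a and c. -/

import Mathlib

noncomputable section

private lemma iso_dist_le {V : Type} {G : SimpleGraph V} (hG : G.Connected)
    (φ : G ≃g G) (x y : V) : G.dist (φ x) (φ y) ≤ G.dist x y := by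
  obtain ⟨p, hp⟩ := hG.exists_walk_length_eq_dist x y
  calc G.dist (φ x) (φ y) ≤ (p.map φ.toHom).length := SimpleGraph.dist_le _
    _ = p.length := p.length_map _
    _ = G.dist x y := hp

private lemma iso_dist_eq {V : Type} {G : SimpleGraph V} (hG : G.Connected)
    (φ : G ≃g G) (x y : V) : G.dist (φ x) (φ y) = G.dist x y := by
  refine le_antisymm (iso_dist_le hG φ x y) ?_
  have := iso_dist_le hG φ.symm (φ x) (φ y)
  simpa using this

/-- variance lower bound in Lemma 7.1. Fix `a, c > 0`. There is a constant
`c₁ = c₁(a,c) > 0` such that: for every finite connected vertex-transitive graph `G = (V,E)`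
with diameter `γ` and `(c,a)`-moderate growth (every ball of radius `r ∈ (0,γ]` contains at
least `c·|V|·(r/γ)^a` vertices), every `o ∈ V`, every `f : V → ℝ` with
`|f(x) − d_G(x,o)| ≤ N` for all `x`, where `0 ≤ N` and `4N ≤ γ`, the variance of `f` under the
uniform measure satisfies `Var(f(X)) ≥ c₁·(γ − 4N)²`. -/
theorem stmt16 (a c : ℝ) (ha : 0 < a) (hc : 0 < c) :
    ∃ c₁ : ℝ, 0 < c₁ ∧
      ∀ (V : Type) (_ : Fintype V) (_ : DecidableEq V) (G : SimpleGraph V)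
        (_ : DecidableRel G.Adj),
        G.Connected →
        (∀ x y : V, ∃ φ : G ≃g G, φ x = y) →
        ∀ γ : ℕ,
        (∀ x y : V, G.dist x y ≤ γ) →
        (∃ x y : V, G.dist x y = γ) →
        (∀ (x : V) (r : ℝ), 0 < r → r ≤ γ →
          c * (Fintype.card V : ℝ) * (r / γ) ^ a
            ≤ ((Finset.univ.filter fun y => (G.dist x y : ℝ) ≤ r).card : ℝ)) →
        ∀ (o : V) (f : V → ℝ) (N : ℝ), 0 ≤ N → 4 * N ≤ (γ : ℝ) →
        (∀ x : V, |f x - (G.dist o x : ℝ)| ≤ N) →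
        c₁ * ((γ : ℝ) - 4 * N) ^ 2 ≤
          (1 / Fintype.card V) * ∑ x : V,
            (f x - (1 / Fintype.card V) * ∑ y : V, f y) ^ 2 := by
  refine ⟨c * (1/4 : ℝ) ^ a / 16, by positivity, ?_⟩
  intro V _ _ G _ hconn htrans γ hdiam hexist hgrowth o f N hN h4N hf
  haveI : Nonempty V := hconn.nonempty
  set n : ℕ := Fintype.card V with hn
  have hnpos : (0 : ℝ) < n := by exact_mod_cast Fintype.card_pos
  set m : ℝ := (1 / n) * ∑ y : V, f y with hm
  have hsq_nonneg : ∀ x : V, (0:ℝ) ≤ (f x - m) ^ 2 := fun x => sq_nonneg _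
  rcases Nat.eq_zero_or_pos γ with hγ0 | hγpos
  · -- γ = 0 forces N = 0, LHS = 0
    have hN0 : N = 0 := by
      have : (γ : ℝ) = 0 := by rw [hγ0]; simp
      linarith [this ▸ h4N]
    rw [hγ0, hN0]
    simp only [Nat.cast_zero]
    have : (1 / (n:ℝ)) * ∑ x : V, (f x - m) ^ 2 ≥ 0 := by positivity
    calc c * (1/4:ℝ)^a / 16 * ((0:ℝ) - 4 * 0) ^ 2 = 0 := by ring
      _ ≤ _ := this
  · have hγR : (0:ℝ) < (γ : ℝ) := by exact_mod_cast hγpos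
    set γR : ℝ := (γ : ℝ) with hγRdef
    -- the ball A around o of radius γ/4
    have hAcard := hgrowth o (γR / 4) (by positivity) (by linarith)
    have h14 : (γR / 4) / γR = 1 / 4 := by
      field_simp
    rw [h14] at hAcard
    -- a vertex z at distance γ from o
    obtain ⟨u, v, huv⟩ := hexist
    obtain ⟨φ, hφ⟩ := htrans u o
    set z : V := φ v with hz
    have hdz : G.dist o z = γ := by
      rw [← hφ, hz, iso_dist_eq hconn, huv]
    -- the ball A' around z of radius γ/4 sits inside B = {dist o y ≥ 3γ/4}
    have hA'card := hgrowth z (γR / 4) (by positivity) (by linarith)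
    rw [h14] at hA'card
    set B : Finset V := Finset.univ.filter fun y => 3 * γR / 4 ≤ (G.dist o y : ℝ) with hB
    have hsub : (Finset.univ.filter fun y => (G.dist z y : ℝ) ≤ γR / 4) ⊆ B := by
      intro y hy
      simp only [Finset.mem_filter, Finset.mem_univ, true_and] at hy
      simp only [hB, Finset.mem_filter, Finset.mem_univ, true_and]
      have htri : G.dist o z ≤ G.dist o y + G.dist y z := hconn.dist_triangle
      have htriR : (G.dist o z : ℝ) ≤ (G.dist o y : ℝ) + (G.dist y z : ℝ) := by
        exact_mod_cast htri
      have hcomm : G.dist y z = G.dist z y := SimpleGraph.dist_comm ..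
      rw [hdz, ← hγRdef] at htriR
      rw [hcomm] at htriR
      linarith
    have hBcard : c * n * (1/4:ℝ) ^ a ≤ (B.card : ℝ) := by
      refine le_trans hA'card ?_
      exact_mod_cast Finset.card_le_card hsub
    -- key sum bound from a subset S where |f x - m| ≥ (γR - 4N)/4
    have key : ∀ S : Finset V, c * n * (1/4:ℝ) ^ a ≤ (S.card : ℝ) →
        (∀ x ∈ S, ((γR - 4*N)/4)^2 ≤ (f x - m)^2) →
        c * (1/4:ℝ)^a / 16 * (γR - 4 * N) ^ 2 ≤ (1 / n) * ∑ x : V, (f x - m) ^ 2 := by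
      intro S hScard hSbd
      have h1 : (c * n * (1/4:ℝ)^a) * ((γR - 4*N)/4)^2 ≤ ∑ x : V, (f x - m)^2 := by
        calc (c * n * (1/4:ℝ)^a) * ((γR - 4*N)/4)^2
            ≤ (S.card : ℝ) * ((γR - 4*N)/4)^2 := by
              apply mul_le_mul_of_nonneg_right hScard (by positivity)
          _ = ∑ _x ∈ S, ((γR - 4*N)/4)^2 := by rw [Finset.sum_const, nsmul_eq_mul]
          _ ≤ ∑ x ∈ S, (f x - m)^2 := Finset.sum_le_sum hSbd
          _ ≤ ∑ x : V, (f x - m)^2 := by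
              apply Finset.sum_le_sum_of_subset_of_nonneg (Finset.subset_univ S)
              intro x _ _; exact sq_nonneg _
      have h2 : (1/(n:ℝ)) * ((c * n * (1/4:ℝ)^a) * ((γR - 4*N)/4)^2)
          = c * (1/4:ℝ)^a / 16 * (γR - 4 * N) ^ 2 := by
        field_simp
        ring
      calc c * (1/4:ℝ)^a / 16 * (γR - 4 * N) ^ 2
          = (1/(n:ℝ)) * ((c * n * (1/4:ℝ)^a) * ((γR - 4*N)/4)^2) := h2.symm
        _ ≤ (1 / n) * ∑ x : V, (f x - m)^2 := by
            apply mul_le_mul_of_nonneg_left h1 (by positivity)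
    have hgap : (0:ℝ) ≤ (γR - 4*N)/4 := by linarith
    by_cases hcase : γR/4 + N + (γR - 4*N)/4 ≤ m
    · -- use A
      apply key _ hAcard
      intro x hx
      simp only [Finset.mem_filter, Finset.mem_univ, true_and] at hx
      have hfx : f x ≤ γR/4 + N := by
        have := abs_le.mp (hf x)
        linarith [this.1, this.2]
      have h1 : (γR - 4*N)/4 ≤ m - f x := by linarith
      have := pow_le_pow_left₀ hgap h1 2
      calc ((γR - 4*N)/4)^2 ≤ (m - f x)^2 := this
        _ = (f x - m)^2 := by ring
    · -- use B
      push_neg at hcase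
      apply key _ hBcard
      intro x hx
      simp only [hB, Finset.mem_filter, Finset.mem_univ, true_and] at hx
      have hfx : 3*γR/4 - N ≤ f x := by
        have := abs_le.mp (hf x)
        linarith [this.1, this.2]
      have h1 : (γR - 4*N)/4 ≤ f x - m := by linarith
      exact pow_le_pow_left₀ hgap h1 2

end
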